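/- Let G be the elementary abelian 2-group of order n = 2^r. For each integer h with 4 ≤ h ≤ n/2 - 2, every subset A of G of size at least n/2 + h - 1 satisfies h^A = G; consequently C_h(G) ≤ n/2 + h - 2. -/

import Mathlib

theorem stmt13 (G : Type*) [AddCommGroup G] [Fintype G] (r h : ℕ)
    (h2g : ∀ g : G, g + g = 0) (hn : Fintype.card G = 2 ^ r)
    (h4 : 4 ≤ h) (hh : h ≤ Fintype.card G / 2 - 2) :
    (∀ A : Finset G, Fintype.card G / 2 + h - 1 ≤ A.card →
      ∀ g : G, ∃ B ⊆ A, B.card = h ∧ B.sum id = g) ∧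
    (∀ m ∈ {m : ℕ | ∃ A : Finset G, A.card = m ∧
        ∃ g : G, ¬ ∃ B ⊆ A, B.card = h ∧ B.sum id = g},
      m ≤ Fintype.card G / 2 + h - 2) := by
  have key : ∀ A : Finset G, Fintype.card G / 2 + h - 1 ≤ A.card →
      ∀ g : G, ∃ B ⊆ A, B.card = h ∧ B.sum id = g := by
    classical
    intro A hA g
    set n := Fintype.card G with hnn
    have hk6 : 6 ≤ n / 2 := by omega
    have hn12 : 12 ≤ n := by omega
    have hr : r ≠ 0 := by rintro rfl; simp at hn; omega
    have hdvd : 2 ∣ n := by rw [hn]; exact dvd_pow_self 2 hr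
    -- step 1: choose S0 ⊆ A of size h - 2
    obtain ⟨S0, hS0A, hS0card⟩ := Finset.exists_subset_card_eq (s := A) (n := h - 2) (by omega)
    -- step 2: find S ⊆ A, |S| = h - 2, sum S ≠ g
    have hex : ∃ S ⊆ A, S.card = h - 2 ∧ S.sum id ≠ g := by
      by_cases hs : S0.sum id = g
      · obtain ⟨a, ha⟩ : S0.Nonempty := Finset.card_pos.mp (by omega)
        obtain ⟨b, hb⟩ : (A \ S0).Nonempty := Finset.card_pos.mp
          (by rw [Finset.card_sdiff_of_subset hS0A]; omega)
        obtain ⟨hbA, hbS0⟩ := Finset.mem_sdiff.mp hb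
        have hb' : b ∉ S0.erase a := fun hx => hbS0 (Finset.mem_of_mem_erase hx)
        refine ⟨insert b (S0.erase a), ?_, ?_, ?_⟩
        · intro z hz
          rcases Finset.mem_insert.mp hz with rfl | hz
          · exact hbA
          · exact hS0A (Finset.mem_of_mem_erase hz)
        · rw [Finset.card_insert_of_notMem hb', Finset.card_erase_of_mem ha, hS0card]
          omega
        · intro hc
          rw [Finset.sum_insert hb'] at hc
          have h1 : (S0.erase a).sum id + id a = g := by
            rw [← hs]; exact Finset.sum_erase_add S0 id ha
          have h2 : (S0.erase a).sum id = g - a := eq_sub_of_add_eq h1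
          rw [h2] at hc
          have hb2 : id b = g - (g - a) := eq_sub_of_add_eq hc
          simp only [sub_sub_cancel, id] at hb2
          exact hbS0 (hb2 ▸ ha)
      · exact ⟨S0, hS0A, hS0card, hs⟩
    obtain ⟨S, hSA, hScard, hSsum⟩ := hex
    set t : G := g - S.sum id with ht
    have ht0 : t ≠ 0 := fun hc => hSsum (sub_eq_zero.mp hc).symm
    set A' := A \ S with hA'
    have hA'card : n / 2 + 1 ≤ A'.card := by
      rw [hA', Finset.card_sdiff_of_subset hSA, hScard]; omega
    set B := A'.image (fun x => t + x) with hB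
    have hBcard : B.card = A'.card := Finset.card_image_of_injective _ (add_right_injective t)
    have hinter : (A' ∩ B).Nonempty := by
      rw [← Finset.card_pos]
      have h1 := Finset.card_inter_add_card_union A' B
      have h2 : (A' ∪ B).card ≤ n := Finset.card_le_univ _
      omega
    obtain ⟨x, hx⟩ := hinter
    obtain ⟨hxA', hxB⟩ := Finset.mem_inter.mp hx
    obtain ⟨y, hyA', hyx⟩ := Finset.mem_image.mp hxB
    -- hyx : t + y = x
    have hyx'' : t + x = y := by rw [← hyx, ← add_assoc, h2g t, zero_add]
    have hxy : x ≠ y := by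
      intro hc
      apply ht0
      have : t + y = y := hc ▸ hyx
      exact add_eq_right.mp this
    have hxS : x ∉ S := (Finset.mem_sdiff.mp hxA').2
    have hyS : y ∉ S := (Finset.mem_sdiff.mp hyA').2
    have hxA : x ∈ A := (Finset.mem_sdiff.mp hxA').1
    have hyA : y ∈ A := (Finset.mem_sdiff.mp hyA').1
    have hxyS : x ∉ insert y S := by simp [hxy, hxS]
    refine ⟨insert x (insert y S), ?_, ?_, ?_⟩
    · simp only [Finset.insert_subset_iff]
      exact ⟨hxA, hyA, hSA⟩
    · rw [Finset.card_insert_of_notMem hxyS, Finset.card_insert_of_notMem hyS, hScard]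
      omega
    · rw [Finset.sum_insert hxyS, Finset.sum_insert hyS]
      have hxyt : id x + id y = t := by
        simp only [id]
        rw [← hyx'', add_left_comm, h2g x, add_zero]
      rw [← add_assoc, hxyt, ht, sub_add_cancel]
  refine ⟨key, ?_⟩
  intro m hm
  simp only [Set.mem_setOf_eq] at hm
  obtain ⟨A, hAcard, g, hg⟩ := hm
  by_contra hc
  exact hg (key A (by omega) g)
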